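/- Let p be a prime and let A be the p×p matrix over F_p, with rows and columns indexed by the elements of F_p (identified with 0,1,…,p−1), defined by: A(s,s) = 0 for all s; A(s,0) = 1 for all s ≠ 0; and A(s,t) = (s−t)^{−1} (inverse computed in F_p) for all t ≠ 0 and s ≠ t. Then every 2×2 submatrix of A, obtained by selecting any two distinct rows and any two distinct columns, is invertible. -/

import Mathlib

/-- Every 2×2 submatrix of the matrix A of Construction 2.6 (rows and columns indexed by
F_p, A(s,s)=0, A(s,0)=1 for s ≠ 0, A(s,t)=(s−t)⁻¹ for t ≠ 0, s ≠ t) is invertible. -/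
theorem construction_A_two_by_two_submatrices_invertible
    (p : ℕ) [Fact p.Prime] (A : Matrix (ZMod p) (ZMod p) (ZMod p))
    (hdiag : ∀ s : ZMod p, A s s = 0)
    (hcol : ∀ s : ZMod p, s ≠ 0 → A s 0 = 1)
    (hentry : ∀ s t : ZMod p, t ≠ 0 → s ≠ t → A s t = (s - t)⁻¹) :
    ∀ i j k l : ZMod p, i ≠ j → k ≠ l →
      Matrix.det !![A i k, A i l; A j k, A j l] ≠ 0 := by
  intro i j k l hij hkl
  have hfield : ∀ a b : ZMod p, a ≠ b → (a - b)⁻¹ ≠ 0 := fun a b h =>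
    inv_ne_zero (sub_ne_zero.mpr h)
  simp only [Matrix.det_fin_two_of]
  rcases eq_or_ne k 0 with rfl | hk
  · -- k = 0, so l ≠ 0
    have hl : l ≠ 0 := hkl.symm
    rcases eq_or_ne i 0 with rfl | hi
    · rw [hdiag, hcol j hij.symm, hentry 0 l hl hkl]
      simpa using hfield 0 l hkl
    rcases eq_or_ne j 0 with rfl | hj
    · rw [hdiag, hcol i hi, hentry 0 l hl hkl]
      simpa using hfield 0 l hkl
    · rw [hcol i hi, hcol j hj]
      rcases eq_or_ne i l with rfl | hil
      · rw [hdiag, hentry j i hl (fun h => hij h.symm)]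
        simpa using hfield j i (fun h => hij h.symm)
      rcases eq_or_ne j l with rfl | hjl
      · rw [hdiag, hentry i j hl hij]
        simpa using hfield i j hij
      · rw [hentry i l hl hil, hentry j l hl hjl]
        have h1 : i - l ≠ 0 := sub_ne_zero.mpr hil
        have h2 : j - l ≠ 0 := sub_ne_zero.mpr hjl
        field_simp
        intro h
        exact sub_ne_zero.mpr hij (by linear_combination (div_eq_zero_iff.mp h).resolve_right (mul_ne_zero h2 h1))
  rcases eq_or_ne l 0 with rfl | hl
  · rcases eq_or_ne i 0 with rfl | hi
    · rw [hdiag, hcol j hij.symm, hentry 0 k hk hkl.symm]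
      simpa using hfield 0 k hkl.symm
    rcases eq_or_ne j 0 with rfl | hj
    · rw [hdiag, hcol i hi, hentry 0 k hk hkl.symm]
      simpa using hfield 0 k hkl.symm
    · rw [hcol i hi, hcol j hj]
      rcases eq_or_ne i k with rfl | hik
      · rw [hdiag, hentry j i hk (fun h => hij h.symm)]
        simpa using hfield j i (fun h => hij h.symm)
      rcases eq_or_ne j k with rfl | hjk
      · rw [hdiag, hentry i j hk hij]
        simpa using hfield i j hij
      · rw [hentry i k hk hik, hentry j k hk hjk]
        have h1 : i - k ≠ 0 := sub_ne_zero.mpr hik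
        have h2 : j - k ≠ 0 := sub_ne_zero.mpr hjk
        field_simp
        intro h
        exact sub_ne_zero.mpr hij (by linear_combination (-1 : ZMod p) * (div_eq_zero_iff.mp h).resolve_right (mul_ne_zero h1 h2))
  · -- k ≠ 0, l ≠ 0
    rcases eq_or_ne i k with rfl | hik
    · -- i = k
      rw [hdiag, hentry i l hl hkl, hentry j i hk (fun h => hij h.symm)]
      simpa using mul_ne_zero (hfield i l hkl) (hfield j i (fun h => hij h.symm))
    rcases eq_or_ne j k with rfl | hjk
    · rw [hdiag, hentry i j hk hij, hentry j l hl hkl]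
      simpa using mul_ne_zero (hfield i j hij) (hfield j l hkl)
    rcases eq_or_ne i l with rfl | hil
    · rw [hdiag, hentry i k hk hik, hentry j i hl (fun h => hij h.symm)]
      simpa using mul_ne_zero (hfield i k hik) (hfield j i (fun h => hij h.symm))
    rcases eq_or_ne j l with rfl | hjl
    · rw [hdiag, hentry i j hl hij, hentry j k hk hjk]
      simpa using mul_ne_zero (hfield i j hij) (hfield j k hjk)
    · rw [hentry i k hk hik, hentry i l hl hil, hentry j k hk hjk, hentry j l hl hjl]
      have h1 : i - k ≠ 0 := sub_ne_zero.mpr hik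
      have h2 : i - l ≠ 0 := sub_ne_zero.mpr hil
      have h3 : j - k ≠ 0 := sub_ne_zero.mpr hjk
      have h4 : j - l ≠ 0 := sub_ne_zero.mpr hjl
      field_simp
      intro h
      exact mul_ne_zero (sub_ne_zero.mpr hij) (sub_ne_zero.mpr hkl)
        (by linear_combination (-1 : ZMod p) * (div_eq_zero_iff.mp h).resolve_right (mul_ne_zero (mul_ne_zero (mul_ne_zero h1 h4) h2) h3))
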